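/- For every δ > 0, the ratio (∫_{|ξ|>δ} e^{−Q(t,ξ)} dξ) / (∫_{ℝⁿ} e^{−Q(t,ξ)} dξ) tends to 0 as t → ∞. -/

import Mathlib

open MeasureTheory Real Filter Topology

/-- `Q(t,ξ) := ∫₀ᵗ q(τ,ξ) dτ`. -/
noncomputable def Qint {n : ℕ} (q : ℝ → EuclideanSpace ℝ (Fin n) → ℝ)
    (t : ℝ) (ξ : EuclideanSpace ℝ (Fin n)) : ℝ :=
  ∫ τ in (0:ℝ)..t, q τ ξ

set_option maxHeartbeats 1000000 in
theorem stmt4 {n : ℕ} (hn : 1 ≤ n)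
    (ψ : EuclideanSpace ℝ (Fin n) → ℝ) (hψ_cont : Continuous ψ)
    (hψ_pos : ∀ ξ, ξ ≠ 0 → 0 < ψ ξ)
    (hψ_infty : Tendsto ψ (cocompact (EuclideanSpace ℝ (Fin n))) atTop)
    (hψ_growth : ∀ ε : ℝ, 0 < ε → ∃ Cε : ℝ, 0 ≤ Cε ∧ ∀ ξ, ψ ξ ≤ Cε * ‖ξ‖ ^ 2 + ε)
    (hψ_int : ∀ c : ℝ, 0 < c → Integrable (fun ξ => Real.exp (-(c * ψ ξ))))
    (q : ℝ → EuclideanSpace ℝ (Fin n) → ℝ)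
    (hq_meas : Measurable (fun p : ℝ × EuclideanSpace ℝ (Fin n) => q p.1 p.2))
    (κ₀ κ₁ : ℝ) (hκ₀ : 0 < κ₀) (hκ : κ₀ ≤ κ₁)
    (hq_bound : ∀ τ, 0 ≤ τ → ∀ ξ, κ₀ * ψ ξ ≤ q τ ξ ∧ q τ ξ ≤ κ₁ * ψ ξ)
    (δ : ℝ) (hδ : 0 < δ) :
    Tendsto (fun t =>
        (∫ ξ in {ξ : EuclideanSpace ℝ (Fin n) | δ < ‖ξ‖}, Real.exp (-(Qint q t ξ))) /
          ∫ ξ, Real.exp (-(Qint q t ξ)))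
      atTop (𝓝 0) := by
  have hκ₁ : 0 < κ₁ := lt_of_lt_of_le hκ₀ hκ
  -- uniform positive lower bound for ψ outside the ball of radius δ
  obtain ⟨m, hm_pos, hm⟩ :
      ∃ m : ℝ, 0 < m ∧ ∀ ξ : EuclideanSpace ℝ (Fin n), δ ≤ ‖ξ‖ → m ≤ ψ ξ := by
    have h1 : {ξ : EuclideanSpace ℝ (Fin n) | (1:ℝ) ≤ ψ ξ} ∈
        cocompact (EuclideanSpace ℝ (Fin n)) := hψ_infty.eventually_ge_atTop 1
    obtain ⟨K, hK, hKsub⟩ := mem_cocompact.mp h1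
    have hScl : IsClosed {ξ : EuclideanSpace ℝ (Fin n) | δ ≤ ‖ξ‖} :=
      isClosed_le continuous_const continuous_norm
    have hScomp : IsCompact (K ∩ {ξ | δ ≤ ‖ξ‖}) := hK.inter_right hScl
    rcases (K ∩ {ξ | δ ≤ ‖ξ‖}).eq_empty_or_nonempty with hS | hS
    · refine ⟨1, one_pos, fun ξ hξ => ?_⟩
      have hξK : ξ ∉ K := by
        intro hmem
        have hin : ξ ∈ K ∩ {ξ | δ ≤ ‖ξ‖} := ⟨hmem, hξ⟩
        rw [hS] at hin
        exact hin
      exact hKsub hξK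
    · obtain ⟨ξ₀, hξ₀S, hmin⟩ := hScomp.exists_isMinOn hS hψ_cont.continuousOn
      have hξ₀ne : ξ₀ ≠ 0 := by
        intro h
        have := hξ₀S.2
        simp [h] at this
        linarith
      refine ⟨min (ψ ξ₀) 1, lt_min (hψ_pos ξ₀ hξ₀ne) one_pos, fun ξ hξ => ?_⟩
      by_cases hξK : ξ ∈ K
      · exact le_trans (min_le_left _ _) (hmin ⟨hξK, hξ⟩)
      · exact le_trans (min_le_right _ _) (hKsub hξK)
  -- growth constants
  obtain ⟨ε, hε_def⟩ : ∃ ε : ℝ, ε = κ₀ * m / (4 * κ₁) := ⟨_, rfl⟩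
  have hε : 0 < ε := by rw [hε_def]; positivity
  obtain ⟨Cε, hCε, hgrow⟩ := hψ_growth ε hε
  obtain ⟨r, hr_def⟩ : ∃ r : ℝ, r = Real.sqrt (ε / (Cε + 1)) := ⟨_, rfl⟩
  have hr : 0 < r := by rw [hr_def]; exact Real.sqrt_pos.2 (by positivity)
  have hr2 : r ^ 2 = ε / (Cε + 1) := by rw [hr_def]; exact Real.sq_sqrt (by positivity)
  obtain ⟨b, hb_def⟩ : ∃ b : ℝ, b = Cε * r ^ 2 + ε := ⟨_, rfl⟩
  have hb_nonneg : 0 ≤ b := by rw [hb_def]; positivity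
  have hb2ε : b ≤ 2 * ε := by
    have h1 : Cε * r ^ 2 ≤ ε := by
      rw [hr2, div_eq_inv_mul, ← mul_assoc]
      have h2 : Cε * (Cε + 1)⁻¹ ≤ 1 := by
        rw [mul_inv_le_iff₀ (by positivity)]
        linarith
      nlinarith [hε.le]
    rw [hb_def]; linarith
  have hκ₁b : κ₁ * b ≤ κ₀ * m / 2 := by
    have h1 : κ₁ * b ≤ κ₁ * (2 * ε) := by nlinarith
    have h2 : κ₁ * (2 * ε) = κ₀ * m / 2 := by
      rw [hε_def]; field_simp; ring
    linarith
  obtain ⟨c, hc_def⟩ : ∃ c : ℝ, c = κ₀ * m - κ₁ * b := ⟨_, rfl⟩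
  have hc : 0 < c := by
    have h1 : 0 < κ₀ * m / 2 := by positivity
    rw [hc_def]; linarith
  -- measurability of τ ↦ q τ ξ
  have hq_meas_l : ∀ ξ, Measurable (fun τ => q τ ξ) := fun ξ =>
    hq_meas.comp (measurable_id.prodMk measurable_const)
  -- interval integrability
  have hqInt : ∀ t : ℝ, 0 ≤ t → ∀ ξ, IntervalIntegrable (fun τ => q τ ξ) volume 0 t := by
    intro t ht ξ
    rw [intervalIntegrable_iff_integrableOn_Ioc_of_le ht]
    refine Integrable.mono' (g := fun _ => κ₁ * |ψ ξ|)
      (integrableOn_const measure_Ioc_lt_top.ne)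
      ((hq_meas_l ξ).aestronglyMeasurable.restrict) ?_
    filter_upwards [ae_restrict_mem measurableSet_Ioc] with τ hτ
    have h := hq_bound τ hτ.1.le ξ
    rw [Real.norm_eq_abs, abs_le]
    constructor
    · nlinarith [neg_abs_le (ψ ξ), le_abs_self (ψ ξ), abs_nonneg (ψ ξ)]
    · nlinarith [le_abs_self (ψ ξ), abs_nonneg (ψ ξ)]
  -- pointwise bounds on Qint
  have hQ_low : ∀ t : ℝ, 0 ≤ t → ∀ ξ, κ₀ * t * ψ ξ ≤ Qint q t ξ := by
    intro t ht ξ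
    have h := intervalIntegral.integral_mono_on (f := fun _ => κ₀ * ψ ξ)
      (g := fun τ => q τ ξ) ht (intervalIntegrable_const) (hqInt t ht ξ)
      (fun τ hτ => (hq_bound τ hτ.1 ξ).1)
    calc κ₀ * t * ψ ξ = ∫ _ in (0:ℝ)..t, κ₀ * ψ ξ := by
          rw [intervalIntegral.integral_const, smul_eq_mul]; ring
      _ ≤ Qint q t ξ := h
  have hQ_high : ∀ t : ℝ, 0 ≤ t → ∀ ξ, Qint q t ξ ≤ κ₁ * t * ψ ξ := by
    intro t ht ξ
    have h := intervalIntegral.integral_mono_on (f := fun τ => q τ ξ)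
      (g := fun _ => κ₁ * ψ ξ) ht (hqInt t ht ξ) (intervalIntegrable_const)
      (fun τ hτ => (hq_bound τ hτ.1 ξ).2)
    calc Qint q t ξ ≤ ∫ _ in (0:ℝ)..t, κ₁ * ψ ξ := h
      _ = κ₁ * t * ψ ξ := by rw [intervalIntegral.integral_const, smul_eq_mul]; ring
  -- measurability of ξ ↦ Qint q t ξ
  have hQsm : ∀ t : ℝ, 0 ≤ t → StronglyMeasurable (fun ξ => Qint q t ξ) := by
    intro t ht
    have h1 : StronglyMeasurable
        (fun ξ : EuclideanSpace ℝ (Fin n) =>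
          ∫ τ in Set.Ioc (0:ℝ) t, q τ ξ) :=
      (hq_meas.comp measurable_swap).stronglyMeasurable.integral_prod_right'
    have heq : (fun ξ : EuclideanSpace ℝ (Fin n) => Qint q t ξ) =
        fun ξ => ∫ τ in Set.Ioc (0:ℝ) t, q τ ξ :=
      funext fun ξ => intervalIntegral.integral_of_le ht
    rw [heq]; exact h1
  -- integrability of exp(-Qint t)
  have hInt : ∀ t : ℝ, 1 ≤ t →
      Integrable (fun ξ => Real.exp (-(Qint q t ξ))) := by
    intro t ht
    have ht0 : 0 ≤ t := le_trans zero_le_one ht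
    refine (hψ_int (κ₀ * t) (by positivity)).mono'
      ((hQsm t ht0).measurable.neg.exp.aestronglyMeasurable) ?_
    filter_upwards with ξ
    rw [Real.norm_eq_abs, abs_of_pos (Real.exp_pos _)]
    exact Real.exp_le_exp.2 (neg_le_neg (hQ_low t ht0 ξ))
  obtain ⟨V, hV_def⟩ : ∃ V : ℝ,
      V = (volume (Metric.closedBall (0 : EuclideanSpace ℝ (Fin n)) r)).toReal := ⟨_, rfl⟩
  have hV : 0 < V := by
    rw [hV_def]
    exact ENNReal.toReal_pos (Metric.measure_closedBall_pos volume _ hr).ne'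
      measure_closedBall_lt_top.ne
  obtain ⟨A, hA_def⟩ : ∃ A : ℝ,
      A = ∫ ξ : EuclideanSpace ℝ (Fin n), Real.exp (-(κ₀ * ψ ξ)) := ⟨_, rfl⟩
  have hA : 0 ≤ A := hA_def ▸ integral_nonneg fun ξ => (Real.exp_pos _).le
  -- denominator lower bound
  have hden : ∀ t : ℝ, 1 ≤ t →
      Real.exp (-(κ₁ * b * t)) * V ≤ ∫ ξ, Real.exp (-(Qint q t ξ)) := by
    intro t ht
    have ht0 : 0 ≤ t := le_trans zero_le_one ht
    have h1 : Real.exp (-(κ₁ * b * t)) * V ≤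
        ∫ ξ in Metric.closedBall (0 : EuclideanSpace ℝ (Fin n)) r,
          Real.exp (-(Qint q t ξ)) := by
      rw [hV_def, mul_comm, ← smul_eq_mul, ← measureReal_def]
      refine setIntegral_ge_of_const_le measurableSet_closedBall
        measure_closedBall_lt_top.ne (fun ξ hξ => ?_) ((hInt t ht).integrableOn)
      have hξr : ‖ξ‖ ≤ r := by simpa using hξ
      have hψb : ψ ξ ≤ b := by
        have h3 := hgrow ξ
        have h2 : Cε * ‖ξ‖ ^ 2 ≤ Cε * r ^ 2 :=
          mul_le_mul_of_nonneg_left (pow_le_pow_left₀ (norm_nonneg ξ) hξr 2) hCε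
        rw [hb_def]; linarith
      have hQb : Qint q t ξ ≤ κ₁ * b * t := by
        have h3 := hQ_high t ht0 ξ
        nlinarith [mul_nonneg (mul_nonneg hκ₁.le ht0) (sub_nonneg.2 hψb)]
      exact Real.exp_le_exp.2 (neg_le_neg hQb)
    have h2 : (∫ ξ in Metric.closedBall (0 : EuclideanSpace ℝ (Fin n)) r,
          Real.exp (-(Qint q t ξ))) ≤ ∫ ξ, Real.exp (-(Qint q t ξ)) :=
      setIntegral_le_integral (hInt t ht)
        (Filter.Eventually.of_forall fun ξ => (Real.exp_pos _).le)
    linarith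
  -- numerator upper bound
  have hnum : ∀ t : ℝ, 1 ≤ t →
      (∫ ξ in {ξ : EuclideanSpace ℝ (Fin n) | δ < ‖ξ‖}, Real.exp (-(Qint q t ξ))) ≤
        Real.exp (κ₀ * m) * Real.exp (-(κ₀ * m * t)) * A := by
    intro t ht
    have ht0 : 0 ≤ t := le_trans zero_le_one ht
    have hsetmeas : MeasurableSet {ξ : EuclideanSpace ℝ (Fin n) | δ < ‖ξ‖} :=
      (isOpen_lt continuous_const continuous_norm).measurableSet
    have hptwise : ∀ᵐ ξ ∂(volume.restrict {ξ : EuclideanSpace ℝ (Fin n) | δ < ‖ξ‖}),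
        Real.exp (-(Qint q t ξ)) ≤
          Real.exp (κ₀ * m) * Real.exp (-(κ₀ * m * t)) * Real.exp (-(κ₀ * ψ ξ)) := by
      rw [ae_restrict_iff' hsetmeas]
      filter_upwards with ξ hξ
      have hψm : m ≤ ψ ξ := hm ξ (le_of_lt hξ)
      have hQ : κ₀ * m * t - κ₀ * m + κ₀ * ψ ξ ≤ Qint q t ξ := by
        have h3 := hQ_low t ht0 ξ
        nlinarith [mul_nonneg (mul_nonneg hκ₀.le (sub_nonneg.2 ht)) (sub_nonneg.2 hψm)]
      calc Real.exp (-(Qint q t ξ))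
          ≤ Real.exp (-(κ₀ * m * t - κ₀ * m + κ₀ * ψ ξ)) :=
            Real.exp_le_exp.2 (neg_le_neg hQ)
        _ = Real.exp (κ₀ * m) * Real.exp (-(κ₀ * m * t)) * Real.exp (-(κ₀ * ψ ξ)) := by
            rw [← Real.exp_add, ← Real.exp_add]; ring_nf
    have hgInt : Integrable (fun ξ : EuclideanSpace ℝ (Fin n) =>
        Real.exp (κ₀ * m) * Real.exp (-(κ₀ * m * t)) * Real.exp (-(κ₀ * ψ ξ))) :=
      (hψ_int κ₀ hκ₀).const_mul _
    have h1 : (∫ ξ in {ξ : EuclideanSpace ℝ (Fin n) | δ < ‖ξ‖},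
          Real.exp (-(Qint q t ξ))) ≤
        ∫ ξ in {ξ : EuclideanSpace ℝ (Fin n) | δ < ‖ξ‖},
          Real.exp (κ₀ * m) * Real.exp (-(κ₀ * m * t)) * Real.exp (-(κ₀ * ψ ξ)) :=
      integral_mono_of_nonneg
        (Filter.Eventually.of_forall fun ξ => (Real.exp_pos _).le)
        hgInt.restrict hptwise
    have h2 : (∫ ξ in {ξ : EuclideanSpace ℝ (Fin n) | δ < ‖ξ‖},
          Real.exp (κ₀ * m) * Real.exp (-(κ₀ * m * t)) * Real.exp (-(κ₀ * ψ ξ))) ≤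
        ∫ ξ : EuclideanSpace ℝ (Fin n),
          Real.exp (κ₀ * m) * Real.exp (-(κ₀ * m * t)) * Real.exp (-(κ₀ * ψ ξ)) :=
      setIntegral_le_integral hgInt
        (Filter.Eventually.of_forall fun ξ => by positivity)
    have h3 : (∫ ξ : EuclideanSpace ℝ (Fin n),
          Real.exp (κ₀ * m) * Real.exp (-(κ₀ * m * t)) * Real.exp (-(κ₀ * ψ ξ))) =
        Real.exp (κ₀ * m) * Real.exp (-(κ₀ * m * t)) * A := by
      rw [hA_def, ← integral_const_mul]
    linarith
  -- the explicit exponential bound on the ratio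
  have hbound : ∀ t : ℝ, 1 ≤ t →
      (∫ ξ in {ξ : EuclideanSpace ℝ (Fin n) | δ < ‖ξ‖}, Real.exp (-(Qint q t ξ))) /
          (∫ ξ, Real.exp (-(Qint q t ξ))) ≤
        (Real.exp (κ₀ * m) * A / V) * Real.exp (-(c * t)) := by
    intro t ht
    have hD₀ : 0 < Real.exp (-(κ₁ * b * t)) * V := by positivity
    have hdiv : (∫ ξ in {ξ : EuclideanSpace ℝ (Fin n) | δ < ‖ξ‖},
          Real.exp (-(Qint q t ξ))) / (∫ ξ, Real.exp (-(Qint q t ξ))) ≤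
        (Real.exp (κ₀ * m) * Real.exp (-(κ₀ * m * t)) * A) /
          (Real.exp (-(κ₁ * b * t)) * V) :=
      div_le_div₀ (by positivity) (hnum t ht) hD₀ (hden t ht)
    have hexp : Real.exp (-(κ₀ * m * t)) / Real.exp (-(κ₁ * b * t)) =
        Real.exp (-(c * t)) := by
      rw [← Real.exp_sub]
      congr 1
      rw [hc_def]; ring
    have heq : (Real.exp (κ₀ * m) * Real.exp (-(κ₀ * m * t)) * A) /
          (Real.exp (-(κ₁ * b * t)) * V) =
        (Real.exp (κ₀ * m) * A / V) *
          (Real.exp (-(κ₀ * m * t)) / Real.exp (-(κ₁ * b * t))) := by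
      ring
    rw [heq, hexp] at hdiv
    exact hdiv
  have hlim : Tendsto (fun t : ℝ =>
      (Real.exp (κ₀ * m) * A / V) * Real.exp (-(c * t))) atTop (𝓝 0) := by
    have h1 : Tendsto (fun t : ℝ => -(c * t)) atTop atBot := by
      apply tendsto_neg_atBot_iff.mpr
      exact Tendsto.const_mul_atTop hc tendsto_id
    have h2 : Tendsto (fun t : ℝ => Real.exp (-(c * t))) atTop (𝓝 0) :=
      Real.tendsto_exp_atBot.comp h1
    have h3 := h2.const_mul (Real.exp (κ₀ * m) * A / V)
    simpa using h3
  refine tendsto_of_tendsto_of_tendsto_of_le_of_le' tendsto_const_nhds hlim ?_ ?_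
  · filter_upwards with t
    exact div_nonneg (integral_nonneg fun ξ => (Real.exp_pos _).le)
      (integral_nonneg fun ξ => (Real.exp_pos _).le)
  · filter_upwards [eventually_ge_atTop (1:ℝ)] with t ht
    exact hbound t ht
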